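/- Let G be a finite group, I and Λ finite index sets, and P a regular Λ×I matrix with entries in G⁰ containing at least one zero entry. Let C be a clique in C(M⁰[G;I,Λ;P]) and let R = {(i,λ) ∈ I×Λ : (i,x,λ) ∈ C for some x ∈ G}. Then: (1) for all (i,λ),(j,μ) ∈ R with (i,λ) ≠ (j,μ), we have p_{λj} = 0 and p_{μi} = 0; (2) if none of O_{1×3}, O_{3×1}, O_{2×2} is a ↔-submatrix of the zero-pattern of P, then |R| ≤ 3; (3) if neither O_{1×2} nor O_{2×1} is a ↔-submatrix of the zero-pattern of P, then |R| ≤ 2. -/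

import Mathlib

variable {G : Type*} [Group G] {I Λ : Type*}

/-- Multiplication in the 0-Rees matrix semigroup `M⁰[G;I,Λ;P]` on `(I×G×Λ) ∪ {0}`.
The zero element is `none`, and a zero entry of `P` is encoded as `none`. -/
def reesMul (P : Λ → I → Option G) :
    Option (I × G × Λ) → Option (I × G × Λ) → Option (I × G × Λ)
  | some (i, x, l), some (j, y, m) => (P l j).map fun p => (i, x * p * y, m)
  | _, _ => none

/-- The commuting graph of `M⁰[G;I,Λ;P]`. Its vertex set is `I×G×Λ`, the set of
non-central elements (the center is `{0}`). -/
def commGraph (P : Λ → I → Option G) : SimpleGraph (I × G × Λ) where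
  Adj a b := a ≠ b ∧ reesMul P (some a) (some b) = reesMul P (some b) (some a)
  symm := ⟨fun _ _ h => ⟨h.1.symm, h.2.symm⟩⟩
  loopless := ⟨fun _ h => h.1 rfl⟩

/-- The all-zeros matrix `O_{n×m}` is a ↔-submatrix of the zero-pattern of `P`: there are
an `n`-element set of rows and an `m`-element set of columns all of whose entries are zero. -/
def OSub (P : Λ → I → Option G) (n m : ℕ) : Prop :=
  ∃ (Λ' : Finset Λ) (I' : Finset I), Λ'.card = n ∧ I'.card = m ∧
    ∀ l ∈ Λ', ∀ i ∈ I', P l i = none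

lemma reesMul_some (P : Λ → I → Option G) (i j : I) (x y : G) (l m : Λ) :
    reesMul P (some (i, x, l)) (some (j, y, m)) = (P l j).map fun p => (i, x * p * y, m) :=
  rfl

lemma three_distinct {α : Type*} [DecidableEq α] {s : Finset α} (h : 2 < s.card) :
    ∃ a ∈ s, ∃ b ∈ s, ∃ c ∈ s, a ≠ b ∧ a ≠ c ∧ b ≠ c := by
  have h1 : 1 < s.card := by omega
  obtain ⟨a, ha, b, hb, hab⟩ := Finset.one_lt_card.mp h1
  have hb' : b ∈ s.erase a := Finset.mem_erase.mpr ⟨hab.symm, hb⟩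
  have h2 : 0 < ((s.erase a).erase b).card := by
    rw [Finset.card_erase_of_mem hb', Finset.card_erase_of_mem ha]
    omega
  obtain ⟨c, hc⟩ := Finset.card_pos.mp h2
  rw [Finset.mem_erase, Finset.mem_erase] at hc
  exact ⟨a, ha, b, hb, c, hc.2.2, hab, (hc.2.1).symm, (hc.1).symm⟩

lemma four_distinct {α : Type*} [DecidableEq α] {s : Finset α} (h : 3 < s.card) :
    ∃ a ∈ s, ∃ b ∈ s, ∃ c ∈ s, ∃ d ∈ s,
      a ≠ b ∧ a ≠ c ∧ a ≠ d ∧ b ≠ c ∧ b ≠ d ∧ c ≠ d := by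
  have h1 : 1 < s.card := by omega
  obtain ⟨a, ha, b, hb, hab⟩ := Finset.one_lt_card.mp h1
  have hb' : b ∈ s.erase a := Finset.mem_erase.mpr ⟨hab.symm, hb⟩
  have h2 : 1 < ((s.erase a).erase b).card := by
    rw [Finset.card_erase_of_mem hb', Finset.card_erase_of_mem ha]
    omega
  obtain ⟨c, hc, d, hd, hcd⟩ := Finset.one_lt_card.mp h2
  rw [Finset.mem_erase, Finset.mem_erase] at hc hd
  exact ⟨a, ha, b, hb, c, hc.2.2, d, hd.2.2, hab, (hc.2.1).symm, (hd.2.1).symm,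
    (hc.1).symm, (hd.1).symm, hcd⟩

/-- Properties of a clique `C` in `C(M⁰[G;I,Λ;P])` and of the associated set
`R = {(i,λ) : (i,x,λ) ∈ C for some x}`: (1) distinct members `(i,λ),(j,μ)` of `R` satisfy
`p_{λj} = p_{μi} = 0`; (2) if none of `O_{1×3}, O_{3×1}, O_{2×2}` is a ↔-submatrix of the
zero-pattern of `P`, then `|R| ≤ 3`; (3) if neither `O_{1×2}` nor `O_{2×1}` is, then
`|R| ≤ 2`. -/
theorem stmt_11 [Fintype G] [Fintype I] [Fintype Λ] (P : Λ → I → Option G)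
    (hrow : ∀ l : Λ, ∃ i : I, P l i ≠ none)
    (hcol : ∀ i : I, ∃ l : Λ, P l i ≠ none)
    (hzero : ∃ (i : I) (l : Λ), P l i = none)
    (C : Set (I × G × Λ)) (hC : (commGraph P).IsClique C) :
    (∀ (i j : I) (l m : Λ),
        (i, l) ∈ {q : I × Λ | ∃ x : G, (q.1, x, q.2) ∈ C} →
        (j, m) ∈ {q : I × Λ | ∃ x : G, (q.1, x, q.2) ∈ C} →
        (i, l) ≠ (j, m) → P l j = none ∧ P m i = none) ∧
    (¬ OSub P 1 3 → ¬ OSub P 3 1 → ¬ OSub P 2 2 →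
      {q : I × Λ | ∃ x : G, (q.1, x, q.2) ∈ C}.ncard ≤ 3) ∧
    (¬ OSub P 1 2 → ¬ OSub P 2 1 →
      {q : I × Λ | ∃ x : G, (q.1, x, q.2) ∈ C}.ncard ≤ 2) := by
  classical
  set R : Set (I × Λ) := {q : I × Λ | ∃ x : G, (q.1, x, q.2) ∈ C} with hRdef
  -- the key "cross" property
  have key : ∀ p ∈ R, ∀ q ∈ R, p ≠ q → P p.2 q.1 = none ∧ P q.2 p.1 = none := by
    rintro ⟨i, l⟩ ⟨x, hx⟩ ⟨j, m⟩ ⟨y, hy⟩ hne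
    simp only at hx hy
    have hvne : (i, x, l) ≠ (j, y, m) := by
      intro h
      rw [Prod.mk.injEq, Prod.mk.injEq] at h
      exact hne (by rw [Prod.mk.injEq]; exact ⟨h.1, h.2.2⟩)
    have hcomm := And.right (hC hx hy hvne)
    rw [reesMul_some, reesMul_some] at hcomm
    show P l j = none ∧ P m i = none
    cases h1 : P l j with
    | none =>
      cases h2 : P m i with
      | none => exact ⟨rfl, rfl⟩
      | some b => rw [h1, h2] at hcomm; simp at hcomm
    | some a =>
      cases h2 : P m i with
      | none => rw [h1, h2] at hcomm; simp at hcomm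
      | some b =>
        rw [h1, h2] at hcomm
        simp only [Option.map_some, Option.some.injEq, Prod.mk.injEq] at hcomm
        exact absurd (by rw [Prod.mk.injEq]; exact ⟨hcomm.1, hcomm.2.2.symm⟩) hne
  -- if two elements of R share a row, that row vanishes on every column of R
  have rowZero : ∀ p ∈ R, ∀ q ∈ R, p ≠ q → p.2 = q.2 → ∀ r ∈ R, P p.2 r.1 = none := by
    intro p hp q hq hpq h2 r hr
    by_cases hrp : r = p
    · rw [h2]
      exact (key q hq r hr fun h => hpq (hrp ▸ h.symm)).1
    · exact (key p hp r hr fun h => hrp h.symm).1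
  -- if two elements of R share a column, that column vanishes on every row of R
  have colZero : ∀ p ∈ R, ∀ q ∈ R, p ≠ q → p.1 = q.1 → ∀ r ∈ R, P r.2 p.1 = none := by
    intro p hp q hq hpq h1 r hr
    by_cases hrp : r = p
    · rw [h1]
      exact (key r hr q hq fun h => hpq (hrp ▸ h)).1
    · exact (key r hr p hp hrp).1
  have part1 : ∀ (i j : I) (l m : Λ), (i, l) ∈ R → (j, m) ∈ R →
      (i, l) ≠ (j, m) → P l j = none ∧ P m i = none := by
    intro i j l m hi hj hne
    exact key (i, l) hi (j, m) hj hne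
  refine ⟨part1, ?_, ?_⟩
  · -- part 2
    intro h13 h31 h22
    by_contra hcard
    push_neg at hcard
    rw [Set.ncard_eq_toFinset_card' R] at hcard
    by_cases hSR : ∃ p ∈ R, ∃ q ∈ R, p ≠ q ∧ p.2 = q.2
    · obtain ⟨p, hp, q, hq, hpq, hpq2⟩ := hSR
      have hpq1 : p.1 ≠ q.1 := fun h => hpq (Prod.ext_iff.mpr ⟨h, hpq2⟩)
      by_cases hSC : ∃ s ∈ R, ∃ t ∈ R, s ≠ t ∧ s.1 = t.1
      · -- shared row AND shared column : O_{2×2}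
        obtain ⟨s, hs, t, ht, hst, hst1⟩ := hSC
        have hst2 : s.2 ≠ t.2 := fun h => hst (Prod.ext_iff.mpr ⟨hst1, h⟩)
        have colFull : ∀ r ∈ R, P r.2 p.1 = none ∧ P r.2 q.1 = none := by
          intro r hr
          constructor
          · by_cases h : r = p
            · subst h
              exact rowZero r hr q hq hpq hpq2 r hr
            · exact (key r hr p hp h).1
          · by_cases h : r = q
            · subst h
              rw [← hpq2]
              exact rowZero p hp r hr hpq hpq2 r hr
            · exact (key r hr q hq h).1
        apply h22
        refine ⟨{s.2, t.2}, {p.1, q.1}, Finset.card_eq_two.mpr ⟨s.2, t.2, hst2, rfl⟩,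
          Finset.card_eq_two.mpr ⟨p.1, q.1, hpq1, rfl⟩, ?_⟩
        intro m hm j hj
        simp only [Finset.mem_insert, Finset.mem_singleton] at hm hj
        rcases hm with hm | hm <;> rcases hj with hj | hj <;> subst hm <;> subst hj
        · exact (colFull s hs).1
        · exact (colFull s hs).2
        · exact (colFull t ht).1
        · exact (colFull t ht).2
      · -- shared row, all columns distinct : O_{1×3}
        push_neg at hSC
        obtain ⟨a, ha, b, hb, c, hc, hab, hac, hbc⟩ :=
          three_distinct (s := R.toFinset) (by omega)
        rw [Set.mem_toFinset] at ha hb hc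
        apply h13
        refine ⟨{p.2}, {a.1, b.1, c.1}, Finset.card_singleton _,
          Finset.card_eq_three.mpr
            ⟨a.1, b.1, c.1, hSC a ha b hb hab, hSC a ha c hc hac, hSC b hb c hc hbc, rfl⟩, ?_⟩
        intro m hm j hj
        simp only [Finset.mem_singleton] at hm
        subst hm
        simp only [Finset.mem_insert, Finset.mem_singleton] at hj
        rcases hj with hj | hj | hj <;> subst hj
        · exact rowZero p hp q hq hpq hpq2 a ha
        · exact rowZero p hp q hq hpq hpq2 b hb
        · exact rowZero p hp q hq hpq hpq2 c hc
    · push_neg at hSR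
      by_cases hSC : ∃ s ∈ R, ∃ t ∈ R, s ≠ t ∧ s.1 = t.1
      · -- shared column, all rows distinct : O_{3×1}
        obtain ⟨s, hs, t, ht, hst, hst1⟩ := hSC
        obtain ⟨a, ha, b, hb, c, hc, hab, hac, hbc⟩ :=
          three_distinct (s := R.toFinset) (by omega)
        rw [Set.mem_toFinset] at ha hb hc
        apply h31
        refine ⟨{a.2, b.2, c.2}, {s.1},
          Finset.card_eq_three.mpr
            ⟨a.2, b.2, c.2, hSR a ha b hb hab, hSR a ha c hc hac, hSR b hb c hc hbc, rfl⟩,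
          Finset.card_singleton _, ?_⟩
        intro m hm j hj
        simp only [Finset.mem_singleton] at hj
        subst hj
        simp only [Finset.mem_insert, Finset.mem_singleton] at hm
        rcases hm with hm | hm | hm <;> subst hm
        · exact colZero s hs t ht hst hst1 a ha
        · exact colZero s hs t ht hst hst1 b hb
        · exact colZero s hs t ht hst hst1 c hc
      · -- all rows and columns distinct : O_{2×2}
        push_neg at hSC
        obtain ⟨a, ha, b, hb, c, hc, d, hd, hab, hac, had, hbc, hbd, hcd⟩ :=
          four_distinct (s := R.toFinset) (by omega)
        rw [Set.mem_toFinset] at ha hb hc hd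
        apply h22
        refine ⟨{a.2, b.2}, {c.1, d.1},
          Finset.card_eq_two.mpr ⟨a.2, b.2, hSR a ha b hb hab, rfl⟩,
          Finset.card_eq_two.mpr ⟨c.1, d.1, hSC c hc d hd hcd, rfl⟩, ?_⟩
        intro m hm j hj
        simp only [Finset.mem_insert, Finset.mem_singleton] at hm hj
        rcases hm with hm | hm <;> rcases hj with hj | hj <;> subst hm <;> subst hj
        · exact (key a ha c hc hac).1
        · exact (key a ha d hd had).1
        · exact (key b hb c hc hbc).1
        · exact (key b hb d hd hbd).1
  · -- part 3
    intro h12 h21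
    by_contra hcard
    push_neg at hcard
    rw [Set.ncard_eq_toFinset_card' R] at hcard
    by_cases hSR : ∃ p ∈ R, ∃ q ∈ R, p ≠ q ∧ p.2 = q.2
    · obtain ⟨p, hp, q, hq, hpq, hpq2⟩ := hSR
      have hpq1 : p.1 ≠ q.1 := fun h => hpq (Prod.ext_iff.mpr ⟨h, hpq2⟩)
      apply h12
      refine ⟨{p.2}, {p.1, q.1}, Finset.card_singleton _,
        Finset.card_eq_two.mpr ⟨p.1, q.1, hpq1, rfl⟩, ?_⟩
      intro m hm j hj
      simp only [Finset.mem_singleton] at hm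
      subst hm
      simp only [Finset.mem_insert, Finset.mem_singleton] at hj
      rcases hj with hj | hj <;> subst hj
      · exact rowZero p hp q hq hpq hpq2 p hp
      · exact rowZero p hp q hq hpq hpq2 q hq
    · push_neg at hSR
      by_cases hSC : ∃ s ∈ R, ∃ t ∈ R, s ≠ t ∧ s.1 = t.1
      · obtain ⟨s, hs, t, ht, hst, hst1⟩ := hSC
        apply h21
        refine ⟨{s.2, t.2}, {s.1},
          Finset.card_eq_two.mpr ⟨s.2, t.2, hSR s hs t ht hst, rfl⟩,
          Finset.card_singleton _, ?_⟩
        intro m hm j hj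
        simp only [Finset.mem_singleton] at hj
        subst hj
        simp only [Finset.mem_insert, Finset.mem_singleton] at hm
        rcases hm with hm | hm <;> subst hm
        · exact colZero s hs t ht hst hst1 s hs
        · exact colZero s hs t ht hst hst1 t ht
      · push_neg at hSC
        obtain ⟨a, ha, b, hb, c, hc, hab, hac, hbc⟩ :=
          three_distinct (s := R.toFinset) (by omega)
        rw [Set.mem_toFinset] at ha hb hc
        apply h12
        refine ⟨{a.2}, {b.1, c.1}, Finset.card_singleton _,
          Finset.card_eq_two.mpr ⟨b.1, c.1, hSC b hb c hc hbc, rfl⟩, ?_⟩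
        intro m hm j hj
        simp only [Finset.mem_singleton] at hm
        subst hm
        simp only [Finset.mem_insert, Finset.mem_singleton] at hj
        rcases hj with hj | hj <;> subst hj
        · exact (key a ha b hb hab).1
        · exact (key a ha c hc hac).1
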